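/- Under the saturation assumption, each of the five functions of δ given by A_1(δ)=∑_{I∈𝕀̄*}Ē_I, A_2(δ)=1+∑_{I∈𝕀}T_I, B_1(δ)=∑_{I∈𝕀*}E_I, B_2(δ)=1+∑_{I∈𝕀̄}T̄_I, and C_1(δ)=∑_{I∈𝕀^{−*}}E_I (all evaluated at α(δ)) can be written on (0,δ̄] as a quotient P(δ)/Q(δ) of real polynomials with Q(δ)≠0 for all δ∈(0,δ̄] and with constant coefficient P(0) > 0. -/

import Mathlib

open Classical Finset

noncomputable section

def nbr {V : Type} [Fintype V] (G : SimpleGraph V) (S : Finset V) : Finset V :=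
  Finset.univ.filter fun j => ∃ i ∈ S, G.Adj i j

def aSum {V : Type} (α : V → ℝ) (S : Finset V) : ℝ := ∑ i ∈ S, α i

def IsIndep {V : Type} (G : SimpleGraph V) (I : Finset V) : Prop :=
  I.Nonempty ∧ ∀ i ∈ I, ∀ j ∈ I, ¬ G.Adj i j

def indepSets {V : Type} [Fintype V] (G : SimpleGraph V) : Finset (Finset V) :=
  Finset.univ.filter fun I => IsIndep G I

def Ncond {V : Type} [Fintype V] (G : SimpleGraph V) (α : V → ℝ) : Prop :=
  ∀ I ∈ indepSets G, aSum α I < aSum α (nbr G I)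

def Tlist {V : Type} [Fintype V] [DecidableEq V] (G : SimpleGraph V) (α : V → ℝ) :
    List V → Finset V → ℝ
  | [], _ => 1
  | i :: l, P =>
      α i / (aSum α (nbr G (insert i P)) - aSum α (insert i P)) * Tlist G α l (insert i P)

def Erat {V : Type} [Fintype V] [DecidableEq V] (G : SimpleGraph V) (α : V → ℝ) :
    List V → Finset V → ℝ
  | [], _ => 0
  | i :: l, P =>
      aSum α (nbr G (insert i P)) / (aSum α (nbr G (insert i P)) - aSum α (insert i P)) +
        Erat G α l (insert i P)

def TI {V : Type} [Fintype V] [DecidableEq V] (G : SimpleGraph V) (α : V → ℝ) (I : Finset V) : ℝ :=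
  ∑ l ∈ I.toList.permutations.toFinset, Tlist G α l ∅

def EI {V : Type} [Fintype V] [DecidableEq V] (G : SimpleGraph V) (α : V → ℝ) (I : Finset V) : ℝ :=
  ∑ l ∈ I.toList.permutations.toFinset, Erat G α l ∅ * Tlist G α l ∅

def meanQ {V : Type} [Fintype V] [DecidableEq V] (G : SimpleGraph V) (α : V → ℝ) : ℝ :=
  (1 + ∑ I ∈ indepSets G, TI G α I)⁻¹ * ∑ I ∈ indepSets G, EI G α I

def IsWord {V : Type} (G : SimpleGraph V) (w : List V) : Prop :=
  w.Pairwise fun a b => ¬ G.Adj a b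

def piHatAux {V : Type} [Fintype V] [DecidableEq V] (G : SimpleGraph V) (α : V → ℝ) :
    List V → Finset V → ℝ
  | [], _ => 1
  | i :: l, P => α i / aSum α (nbr G (insert i P)) * piHatAux G α l (insert i P)

def piHat {V : Type} [Fintype V] [DecidableEq V] (G : SimpleGraph V) (α : V → ℝ) (w : List V) : ℝ :=
  piHatAux G α w ∅

def addEdge {V : Type} (G : SimpleGraph V) (u v : V) : SimpleGraph V :=
  G ⊔ SimpleGraph.fromEdgeSet {s(u, v)}

end

def RatPosCst (db : ℝ) (F : ℝ → ℝ) : Prop :=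
  ∃ P Q : Polynomial ℝ, 0 < P.coeff 0 ∧
    ∀ x : ℝ, 0 < x → x ≤ db → Q.eval x ≠ 0 ∧ F x = P.eval x / Q.eval x


open Classical Finset Polynomial Filter Set


def RatOn (db : ℝ) (F : ℝ → ℝ) : Prop :=
  ∃ P Q : Polynomial ℝ, ∀ x : ℝ, 0 < x → x ≤ db → Q.eval x ≠ 0 ∧ F x = P.eval x / Q.eval x

lemma RatOn.ratio {db : ℝ} (p q : Polynomial ℝ) (hq : ∀ x, 0 < x → x ≤ db → q.eval x ≠ 0) :
    RatOn db (fun x => p.eval x / q.eval x) := ⟨p, q, fun x h1 h2 => ⟨hq x h1 h2, rfl⟩⟩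

lemma RatOn.const (db c : ℝ) : RatOn db (fun _ => c) :=
  ⟨Polynomial.C c, 1, fun x _ _ => ⟨by simp, by simp⟩⟩

lemma RatOn.add {db : ℝ} {f g : ℝ → ℝ} (hf : RatOn db f) (hg : RatOn db g) :
    RatOn db (fun x => f x + g x) := by
  obtain ⟨P1, Q1, h1⟩ := hf; obtain ⟨P2, Q2, h2⟩ := hg
  refine ⟨P1 * Q2 + P2 * Q1, Q1 * Q2, fun x hx hx' => ?_⟩
  obtain ⟨hq1, he1⟩ := h1 x hx hx'; obtain ⟨hq2, he2⟩ := h2 x hx hx'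
  refine ⟨by simp [hq1, hq2], ?_⟩
  show f x + g x = _
  rw [he1, he2]
  simp only [Polynomial.eval_add, Polynomial.eval_mul]
  field_simp

lemma RatOn.mul {db : ℝ} {f g : ℝ → ℝ} (hf : RatOn db f) (hg : RatOn db g) :
    RatOn db (fun x => f x * g x) := by
  obtain ⟨P1, Q1, h1⟩ := hf; obtain ⟨P2, Q2, h2⟩ := hg
  refine ⟨P1 * P2, Q1 * Q2, fun x hx hx' => ?_⟩
  obtain ⟨hq1, he1⟩ := h1 x hx hx'; obtain ⟨hq2, he2⟩ := h2 x hx hx'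
  refine ⟨by simp [hq1, hq2], ?_⟩
  show f x * g x = _
  rw [he1, he2]
  simp only [Polynomial.eval_mul]
  field_simp

lemma RatOn.sum {db : ℝ} {ι : Type*} (s : Finset ι) (f : ι → ℝ → ℝ)
    (h : ∀ i ∈ s, RatOn db (f i)) : RatOn db (fun x => ∑ i ∈ s, f i x) := by
  induction s using Finset.cons_induction with
  | empty => simpa using RatOn.const db 0
  | cons i s hi ih =>
    simp only [Finset.sum_cons]
    exact (h i (Finset.mem_cons_self i s)).add (ih fun j hj => h j (Finset.mem_cons_of_mem hj))

lemma factor_X : ∀ (n : ℕ) (P : Polynomial ℝ), P ≠ 0 → P.natDegree = n →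
    ∃ k P1, (P1 : Polynomial ℝ).coeff 0 ≠ 0 ∧ P = Polynomial.X ^ k * P1 := by
  intro n
  induction n using Nat.strong_induction_on with
  | _ n ih =>
    intro P hP hdeg
    by_cases h0 : P.coeff 0 = 0
    · obtain ⟨P2, rfl⟩ := Polynomial.X_dvd_iff.2 h0
      have hP2 : P2 ≠ 0 := by rintro rfl; simp at hP
      have hd : P2.natDegree < n := by
        have h1 := Polynomial.natDegree_mul (Polynomial.X_ne_zero (R := ℝ)) hP2
        rw [Polynomial.natDegree_X] at h1
        omega
      obtain ⟨k, P1, h1, h2⟩ := ih _ hd P2 hP2 rfl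
      exact ⟨k + 1, P1, h1, by rw [h2]; ring⟩
    · exact ⟨0, P, h0, by simp⟩

lemma ratPosCst_of_lb {db c : ℝ} (hdb : 0 < db) (hc : 0 < c) {F : ℝ → ℝ}
    (hlb : ∀ x, 0 < x → x ≤ db → c ≤ F x) (hR : RatOn db F) : RatPosCst db F := by
  obtain ⟨P, Q, h⟩ := hR
  have hQne : Q ≠ 0 := fun hq => (h db hdb le_rfl).1 (by rw [hq]; simp)
  have hPne : P ≠ 0 := by
    rintro rfl
    have h1 := (h db hdb le_rfl).2
    have h2 := hlb db hdb le_rfl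
    rw [h1] at h2; simp at h2; linarith
  obtain ⟨k, P1, hP1, rfl⟩ := factor_X P.natDegree P hPne rfl
  obtain ⟨m, Q1, hQ1, rfl⟩ := factor_X Q.natDegree Q hQne rfl
  have hQ1x : ∀ x, 0 < x → x ≤ db → Q1.eval x ≠ 0 := by
    intro x hx hx' hq
    apply (h x hx hx').1
    simp [hq]
  have hsign : ∀ x, 0 < x → x ≤ db → 0 < P1.eval x * Q1.eval x := by
    intro x hx hx'
    have hF := (h x hx hx').2
    have hcF := hlb x hx hx'
    have hFpos : 0 < Polynomial.eval x (X ^ k * P1) / Polynomial.eval x (X ^ m * Q1) := by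
      rw [← hF]; linarith
    have hk := pow_pos hx k; have hm := pow_pos hx m
    simp only [Polynomial.eval_mul, Polynomial.eval_pow, Polynomial.eval_X] at hFpos
    rcases div_pos_iff.1 hFpos with ⟨h1, h2⟩ | ⟨h1, h2⟩
    · nlinarith [mul_pos h1 h2, mul_pos hk hm]
    · nlinarith [mul_pos_of_neg_of_neg h1 h2, mul_pos hk hm]
  have hcont : Continuous fun x : ℝ => (P1 * Q1).eval x := Polynomial.continuous _
  have hevent : ∀ᶠ x in nhdsWithin (0:ℝ) (Set.Ioi 0), 0 < x ∧ x ≤ db := by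
    filter_upwards [self_mem_nhdsWithin, Ioo_mem_nhdsGT_of_mem (Set.left_mem_Ico.2 hdb)]
      with x h1 h2
    exact ⟨h1, le_of_lt h2.2⟩
  have h0le : 0 < (P1 * Q1).eval 0 := by
    have hne : (P1 * Q1).eval 0 ≠ 0 := by
      rw [← Polynomial.coeff_zero_eq_eval_zero, Polynomial.mul_coeff_zero]
      exact mul_ne_zero hP1 hQ1
    rcases hne.lt_or_gt with hlt | hgt
    · exfalso
      have ht : Filter.Tendsto (fun x : ℝ => (P1 * Q1).eval x) (nhdsWithin 0 (Set.Ioi 0))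
          (nhds ((P1 * Q1).eval 0)) := (hcont.tendsto 0).mono_left nhdsWithin_le_nhds
      have h2 : (0:ℝ) ≤ (P1 * Q1).eval 0 := by
        refine ge_of_tendsto ht ?_
        filter_upwards [hevent] with x hx
        simpa using le_of_lt (hsign x hx.1 hx.2)
      linarith
    · exact hgt
  rcases le_or_gt k m with hkm | hmk
  · refine ⟨P1 * Q1, X ^ (m - k) * Q1 ^ 2, ?_, ?_⟩
    · rwa [Polynomial.coeff_zero_eq_eval_zero]
    · intro x hx hx'
      have hq1 := hQ1x x hx hx'
      have hxne := ne_of_gt hx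
      constructor
      · simp only [Polynomial.eval_mul, Polynomial.eval_pow, Polynomial.eval_X]
        exact mul_ne_zero (pow_ne_zero _ hxne) (pow_ne_zero _ hq1)
      · have hF := (h x hx hx').2
        simp only [Polynomial.eval_mul, Polynomial.eval_pow, Polynomial.eval_X] at hF ⊢
        rw [hF, show m = k + (m - k) by omega, pow_add]
        field_simp
        rw [Nat.add_sub_cancel_left]
  · exfalso
    have hQ10 : Q1.eval 0 ≠ 0 := by rwa [← Polynomial.coeff_zero_eq_eval_zero]
    have hGcont : Filter.Tendsto (fun x : ℝ => (X ^ (k - m) * P1 : Polynomial ℝ).eval x / Q1.eval x)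
        (nhds 0) (nhds ((X ^ (k - m) * P1 : Polynomial ℝ).eval 0 / Q1.eval 0)) :=
      Filter.Tendsto.div ((Polynomial.continuous _).tendsto 0) ((Polynomial.continuous _).tendsto 0) hQ10
    have hG0 : (X ^ (k - m) * P1 : Polynomial ℝ).eval 0 / Q1.eval 0 = 0 := by
      simp [Polynomial.eval_mul, Polynomial.eval_pow, zero_pow (by omega : k - m ≠ 0)]
    have hFG : ∀ᶠ x in nhdsWithin (0:ℝ) (Set.Ioi 0),
        F x = (X ^ (k - m) * P1 : Polynomial ℝ).eval x / Q1.eval x := by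
      filter_upwards [hevent] with x hx
      have hF := (h x hx.1 hx.2).2
      have hq1 := hQ1x x hx.1 hx.2
      have hxne := ne_of_gt hx.1
      simp only [Polynomial.eval_mul, Polynomial.eval_pow, Polynomial.eval_X] at hF ⊢
      rw [hF, show k = m + (k - m) by omega, pow_add]
      field_simp
      rw [Nat.add_sub_cancel_left]; ring
    have hT : Filter.Tendsto F (nhdsWithin 0 (Set.Ioi 0))
        (nhds ((X ^ (k - m) * P1 : Polynomial ℝ).eval 0 / Q1.eval 0)) :=
      Filter.Tendsto.congr' (hFG.mono fun x hx => hx.symm)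
        (hGcont.mono_left nhdsWithin_le_nhds)
    rw [hG0] at hT
    have : c ≤ 0 := by
      refine ge_of_tendsto hT ?_
      filter_upwards [hevent] with x hx
      exact hlb x hx.1 hx.2
    linarith

section GraphAux

open Polynomial

variable {V : Type} [Fintype V] [DecidableEq V]

lemma union_cons_eq (i : V) (l : List V) (P : Finset V) :
    insert i P ∪ l.toFinset = P ∪ (i :: l).toFinset := by
  ext x
  simp only [Finset.mem_union, Finset.mem_insert, List.toFinset_cons]
  tauto

lemma tlist_pos (G' : SimpleGraph V) (α : V → ℝ) (hα : ∀ i, 0 < α i)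
    (hD : ∀ J : Finset V, J.Nonempty → (∀ i ∈ J, ∀ j ∈ J, ¬ G'.Adj i j) →
      0 < aSum α (nbr G' J) - aSum α J) :
    ∀ (l : List V) (P : Finset V),
      (∀ i ∈ P ∪ l.toFinset, ∀ j ∈ P ∪ l.toFinset, ¬ G'.Adj i j) →
      0 < Tlist G' α l P := by
  intro l
  induction l with
  | nil => intro P _; simp [Tlist]
  | cons i l ih =>
    intro P hpair
    have hsub : ∀ x ∈ insert i P, x ∈ P ∪ (i :: l).toFinset := by
      intro x hx
      simp only [Finset.mem_insert, Finset.mem_union, List.toFinset_cons] at hx ⊢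
      tauto
    have hDpos : 0 < aSum α (nbr G' (insert i P)) - aSum α (insert i P) :=
      hD _ ⟨i, Finset.mem_insert_self i P⟩ (fun x hx y hy => hpair x (hsub x hx) y (hsub y hy))
    have hrec := ih (insert i P) (by rw [union_cons_eq]; exact hpair)
    simp only [Tlist]
    exact mul_pos (div_pos (hα i) hDpos) hrec

lemma erat_nonneg (G' : SimpleGraph V) (α : V → ℝ) (hα : ∀ i, 0 < α i)
    (hD : ∀ J : Finset V, J.Nonempty → (∀ i ∈ J, ∀ j ∈ J, ¬ G'.Adj i j) →
      0 < aSum α (nbr G' J) - aSum α J) :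
    ∀ (l : List V) (P : Finset V),
      (∀ i ∈ P ∪ l.toFinset, ∀ j ∈ P ∪ l.toFinset, ¬ G'.Adj i j) →
      0 ≤ Erat G' α l P := by
  intro l
  induction l with
  | nil => intro P _; simp [Erat]
  | cons i l ih =>
    intro P hpair
    have hsub : ∀ x ∈ insert i P, x ∈ P ∪ (i :: l).toFinset := by
      intro x hx
      simp only [Finset.mem_insert, Finset.mem_union, List.toFinset_cons] at hx ⊢
      tauto
    have hDpos : 0 < aSum α (nbr G' (insert i P)) - aSum α (insert i P) :=
      hD _ ⟨i, Finset.mem_insert_self i P⟩ (fun x hx y hy => hpair x (hsub x hx) y (hsub y hy))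
    have hrec := ih (insert i P) (by rw [union_cons_eq]; exact hpair)
    have hN : 0 ≤ aSum α (nbr G' (insert i P)) :=
      Finset.sum_nonneg fun j _ => (hα j).le
    simp only [Erat]
    have := div_nonneg hN hDpos.le
    linarith

lemma aSum_eval (a b : V → ℝ) (x : ℝ) (S : Finset V) :
    aSum (fun i => a i + b i * x) S =
      (Polynomial.C (∑ i ∈ S, a i) + Polynomial.C (∑ i ∈ S, b i) * Polynomial.X).eval x := by
  simp only [aSum, Polynomial.eval_add, Polynomial.eval_mul, Polynomial.eval_C,
    Polynomial.eval_X, Finset.sum_add_distrib, Finset.sum_mul]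

lemma tlist_ratOn (G' : SimpleGraph V) (a b : V → ℝ) (db : ℝ)
    (hD : ∀ x : ℝ, 0 < x → x ≤ db → ∀ J : Finset V, J.Nonempty →
      (∀ i ∈ J, ∀ j ∈ J, ¬ G'.Adj i j) →
      0 < aSum (fun i => a i + b i * x) (nbr G' J) - aSum (fun i => a i + b i * x) J) :
    ∀ (l : List V) (P : Finset V),
      (∀ i ∈ P ∪ l.toFinset, ∀ j ∈ P ∪ l.toFinset, ¬ G'.Adj i j) →
      RatOn db (fun x => Tlist G' (fun i => a i + b i * x) l P) := by
  intro l
  induction l with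
  | nil => intro P _; simpa [Tlist] using RatOn.const db 1
  | cons i l ih =>
    intro P hpair
    have hsub : ∀ x ∈ insert i P, x ∈ P ∪ (i :: l).toFinset := by
      intro x hx
      simp only [Finset.mem_insert, Finset.mem_union, List.toFinset_cons] at hx ⊢
      tauto
    have hDpos : ∀ x : ℝ, 0 < x → x ≤ db →
        0 < aSum (fun i => a i + b i * x) (nbr G' (insert i P))
          - aSum (fun i => a i + b i * x) (insert i P) := fun x hx hx' =>
      hD x hx hx' _ ⟨i, Finset.mem_insert_self i P⟩
        (fun y hy z hz => hpair y (hsub y hy) z (hsub z hz))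
    have hrec := ih (insert i P) (by rw [union_cons_eq]; exact hpair)
    set num : Polynomial ℝ := Polynomial.C (a i) + Polynomial.C (b i) * Polynomial.X with hnum
    set den : Polynomial ℝ :=
      (Polynomial.C (∑ j ∈ nbr G' (insert i P), a j)
        + Polynomial.C (∑ j ∈ nbr G' (insert i P), b j) * Polynomial.X)
      - (Polynomial.C (∑ j ∈ insert i P, a j)
        + Polynomial.C (∑ j ∈ insert i P, b j) * Polynomial.X) with hden
    have hdeneval : ∀ x : ℝ, den.eval x =
        aSum (fun i => a i + b i * x) (nbr G' (insert i P))
          - aSum (fun i => a i + b i * x) (insert i P) := by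
      intro x; rw [hden, Polynomial.eval_sub, ← aSum_eval, ← aSum_eval]
    have hfun : (fun x => Tlist G' (fun i => a i + b i * x) (i :: l) P) =
        fun x => (num.eval x / den.eval x) *
          Tlist G' (fun i => a i + b i * x) l (insert i P) := by
      funext x
      simp only [Tlist, hdeneval, hnum, Polynomial.eval_add, Polynomial.eval_mul,
        Polynomial.eval_C, Polynomial.eval_X]
    rw [hfun]
    exact RatOn.mul (RatOn.ratio num den
      (fun x hx hx' => by rw [hdeneval]; exact ne_of_gt (hDpos x hx hx'))) hrec

lemma erat_ratOn (G' : SimpleGraph V) (a b : V → ℝ) (db : ℝ)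
    (hD : ∀ x : ℝ, 0 < x → x ≤ db → ∀ J : Finset V, J.Nonempty →
      (∀ i ∈ J, ∀ j ∈ J, ¬ G'.Adj i j) →
      0 < aSum (fun i => a i + b i * x) (nbr G' J) - aSum (fun i => a i + b i * x) J) :
    ∀ (l : List V) (P : Finset V),
      (∀ i ∈ P ∪ l.toFinset, ∀ j ∈ P ∪ l.toFinset, ¬ G'.Adj i j) →
      RatOn db (fun x => Erat G' (fun i => a i + b i * x) l P) := by
  intro l
  induction l with
  | nil => intro P _; simpa [Erat] using RatOn.const db 0
  | cons i l ih =>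
    intro P hpair
    have hsub : ∀ x ∈ insert i P, x ∈ P ∪ (i :: l).toFinset := by
      intro x hx
      simp only [Finset.mem_insert, Finset.mem_union, List.toFinset_cons] at hx ⊢
      tauto
    have hDpos : ∀ x : ℝ, 0 < x → x ≤ db →
        0 < aSum (fun i => a i + b i * x) (nbr G' (insert i P))
          - aSum (fun i => a i + b i * x) (insert i P) := fun x hx hx' =>
      hD x hx hx' _ ⟨i, Finset.mem_insert_self i P⟩
        (fun y hy z hz => hpair y (hsub y hy) z (hsub z hz))
    have hrec := ih (insert i P) (by rw [union_cons_eq]; exact hpair)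
    set num : Polynomial ℝ :=
      Polynomial.C (∑ j ∈ nbr G' (insert i P), a j)
        + Polynomial.C (∑ j ∈ nbr G' (insert i P), b j) * Polynomial.X with hnum
    set den : Polynomial ℝ := num
      - (Polynomial.C (∑ j ∈ insert i P, a j)
        + Polynomial.C (∑ j ∈ insert i P, b j) * Polynomial.X) with hden
    have hnumeval : ∀ x : ℝ,
        num.eval x = aSum (fun i => a i + b i * x) (nbr G' (insert i P)) := by
      intro x; rw [hnum, ← aSum_eval]
    have hdeneval : ∀ x : ℝ, den.eval x =
        aSum (fun i => a i + b i * x) (nbr G' (insert i P))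
          - aSum (fun i => a i + b i * x) (insert i P) := by
      intro x; rw [hden, Polynomial.eval_sub, hnumeval, ← aSum_eval]
    have hfun : (fun x => Erat G' (fun i => a i + b i * x) (i :: l) P) =
        fun x => (num.eval x / den.eval x) +
          Erat G' (fun i => a i + b i * x) l (insert i P) := by
      funext x
      simp only [Erat, hdeneval, hnumeval]
    rw [hfun]
    exact RatOn.add (RatOn.ratio num den
      (fun x hx hx' => by rw [hdeneval]; exact ne_of_gt (hDpos x hx hx'))) hrec

lemma perm_toFinset_eq {I : Finset V} {l : List V}
    (hl : l ∈ I.toList.permutations.toFinset) : l.toFinset = I := by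
  rw [List.mem_toFinset, List.mem_permutations] at hl
  rw [List.toFinset_eq_of_perm _ _ hl, Finset.toList_toFinset]

lemma ti_ratOn (G' : SimpleGraph V) (a b : V → ℝ) (db : ℝ)
    (hD : ∀ x : ℝ, 0 < x → x ≤ db → ∀ J : Finset V, J.Nonempty →
      (∀ i ∈ J, ∀ j ∈ J, ¬ G'.Adj i j) →
      0 < aSum (fun i => a i + b i * x) (nbr G' J) - aSum (fun i => a i + b i * x) J)
    (I : Finset V) (hI : ∀ i ∈ I, ∀ j ∈ I, ¬ G'.Adj i j) :
    RatOn db (fun x => TI G' (fun i => a i + b i * x) I) := by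
  refine RatOn.sum I.toList.permutations.toFinset
    (fun l => fun x => Tlist G' (fun i => a i + b i * x) l ∅) (fun l hl => ?_)
  refine tlist_ratOn G' a b db hD l ∅ ?_
  have hlf := perm_toFinset_eq hl
  intro i hi j hj
  simp only [Finset.empty_union, hlf] at hi hj
  exact hI i hi j hj

lemma ei_ratOn (G' : SimpleGraph V) (a b : V → ℝ) (db : ℝ)
    (hD : ∀ x : ℝ, 0 < x → x ≤ db → ∀ J : Finset V, J.Nonempty →
      (∀ i ∈ J, ∀ j ∈ J, ¬ G'.Adj i j) →
      0 < aSum (fun i => a i + b i * x) (nbr G' J) - aSum (fun i => a i + b i * x) J)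
    (I : Finset V) (hI : ∀ i ∈ I, ∀ j ∈ I, ¬ G'.Adj i j) :
    RatOn db (fun x => EI G' (fun i => a i + b i * x) I) := by
  refine RatOn.sum I.toList.permutations.toFinset
    (fun l => fun x => Erat G' (fun i => a i + b i * x) l ∅ *
      Tlist G' (fun i => a i + b i * x) l ∅) (fun l hl => ?_)
  have hlf := perm_toFinset_eq hl
  have hp : ∀ i ∈ (∅ : Finset V) ∪ l.toFinset, ∀ j ∈ (∅ : Finset V) ∪ l.toFinset,
      ¬ G'.Adj i j := by
    intro i hi j hj
    simp only [Finset.empty_union, hlf] at hi hj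
    exact hI i hi j hj
  exact RatOn.mul (erat_ratOn G' a b db hD l ∅ hp) (tlist_ratOn G' a b db hD l ∅ hp)

lemma ti_nonneg (G' : SimpleGraph V) (α : V → ℝ) (hα : ∀ i, 0 < α i)
    (hD : ∀ J : Finset V, J.Nonempty → (∀ i ∈ J, ∀ j ∈ J, ¬ G'.Adj i j) →
      0 < aSum α (nbr G' J) - aSum α J)
    (I : Finset V) (hI : ∀ i ∈ I, ∀ j ∈ I, ¬ G'.Adj i j) :
    0 ≤ TI G' α I := by
  refine Finset.sum_nonneg fun l hl => ?_
  have hlf := perm_toFinset_eq hl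
  refine le_of_lt (tlist_pos G' α hα hD l ∅ ?_)
  intro i hi j hj
  simp only [Finset.empty_union, hlf] at hi hj
  exact hI i hi j hj

lemma ei_nonneg (G' : SimpleGraph V) (α : V → ℝ) (hα : ∀ i, 0 < α i)
    (hD : ∀ J : Finset V, J.Nonempty → (∀ i ∈ J, ∀ j ∈ J, ¬ G'.Adj i j) →
      0 < aSum α (nbr G' J) - aSum α J)
    (I : Finset V) (hI : ∀ i ∈ I, ∀ j ∈ I, ¬ G'.Adj i j) :
    0 ≤ EI G' α I := by
  refine Finset.sum_nonneg fun l hl => ?_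
  have hlf := perm_toFinset_eq hl
  have hp : ∀ i ∈ (∅ : Finset V) ∪ l.toFinset, ∀ j ∈ (∅ : Finset V) ∪ l.toFinset,
      ¬ G'.Adj i j := by
    intro i hi j hj
    simp only [Finset.empty_union, hlf] at hi hj
    exact hI i hi j hj
  exact mul_nonneg (erat_nonneg G' α hα hD l ∅ hp) (le_of_lt (tlist_pos G' α hα hD l ∅ hp))

lemma ei_single (G' : SimpleGraph V) (α : V → ℝ) (hα : ∀ i, 0 < α i)
    (hD : ∀ J : Finset V, J.Nonempty → (∀ i ∈ J, ∀ j ∈ J, ¬ G'.Adj i j) →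
      0 < aSum α (nbr G' J) - aSum α J)
    (htot : aSum α Finset.univ ≤ 1) (v : V) : α v ≤ EI G' α {v} := by
  have hperm : (({v} : Finset V).toList.permutations).toFinset = {[v]} := by
    ext l
    simp [List.mem_permutations, Finset.toList_singleton, List.perm_singleton]
  have hpairv : ∀ i ∈ ({v} : Finset V), ∀ j ∈ ({v} : Finset V), ¬ G'.Adj i j := by
    intro i hi j hj
    simp only [Finset.mem_singleton] at hi hj
    subst hi; subst hj; exact G'.irrefl
  have hd : 0 < aSum α (nbr G' {v}) - aSum α {v} := hD {v} ⟨v, Finset.mem_singleton_self v⟩ hpairv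
  set N : ℝ := aSum α (nbr G' {v}) with hN
  have hav : aSum α ({v} : Finset V) = α v := by simp [aSum]
  have hNle : N ≤ 1 := by
    refine le_trans ?_ htot
    exact Finset.sum_le_sum_of_subset_of_nonneg (Finset.subset_univ _)
      (fun i _ _ => (hα i).le)
  rw [hav] at hd
  have hdle : N - α v ≤ 1 := by linarith [hα v]
  rw [EI, hperm, Finset.sum_singleton]
  simp only [Erat, Tlist, LawfulSingleton.insert_empty_eq, hav, ← hN, add_zero, mul_one]
  have h1 : α v ≤ α v / (N - α v) := by
    rw [le_div_iff₀ hd]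
    nlinarith [hα v]
  have h2 : (1:ℝ) ≤ N / (N - α v) := by
    rw [le_div_iff₀ hd]
    nlinarith [hα v]
  calc α v ≤ α v / (N - α v) := h1
    _ ≤ N / (N - α v) * (α v / (N - α v)) :=
      le_mul_of_one_le_left (div_nonneg (hα v).le hd.le) h2

end GraphAux

section Assemble

variable {V : Type} [Fintype V] [DecidableEq V]

lemma tsum_ratPosCst (G' : SimpleGraph V) (a b : V → ℝ) (db : ℝ) (hdb : 0 < db)
    (hαpos : ∀ x : ℝ, 0 < x → x ≤ db → ∀ i, 0 < a i + b i * x)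
    (hD : ∀ x : ℝ, 0 < x → x ≤ db → ∀ J : Finset V, J.Nonempty →
      (∀ i ∈ J, ∀ j ∈ J, ¬ G'.Adj i j) →
      0 < aSum (fun i => a i + b i * x) (nbr G' J) - aSum (fun i => a i + b i * x) J)
    (S : Finset (Finset V)) (hS : ∀ I ∈ S, ∀ i ∈ I, ∀ j ∈ I, ¬ G'.Adj i j) :
    RatPosCst db (fun x => 1 + ∑ I ∈ S, TI G' (fun i => a i + b i * x) I) := by
  refine ratPosCst_of_lb hdb one_pos ?_ ?_
  · intro x hx hx'
    have hsum : 0 ≤ ∑ I ∈ S, TI G' (fun i => a i + b i * x) I :=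
      Finset.sum_nonneg fun I hI =>
        ti_nonneg G' _ (hαpos x hx hx') (hD x hx hx') I (hS I hI)
    linarith
  · exact (RatOn.const db 1).add
      (RatOn.sum S _ fun I hI => ti_ratOn G' a b db hD I (hS I hI))

lemma esum_ratPosCst (G' : SimpleGraph V) (a b : V → ℝ) (db : ℝ) (hdb : 0 < db)
    (hαpos : ∀ x : ℝ, 0 < x → x ≤ db → ∀ i, 0 < a i + b i * x)
    (hD : ∀ x : ℝ, 0 < x → x ≤ db → ∀ J : Finset V, J.Nonempty →
      (∀ i ∈ J, ∀ j ∈ J, ¬ G'.Adj i j) →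
      0 < aSum (fun i => a i + b i * x) (nbr G' J) - aSum (fun i => a i + b i * x) J)
    (htot : ∀ x : ℝ, 0 < x → x ≤ db → aSum (fun i => a i + b i * x) Finset.univ ≤ 1)
    (S : Finset (Finset V)) (hS : ∀ I ∈ S, ∀ i ∈ I, ∀ j ∈ I, ¬ G'.Adj i j)
    (v : V) (hav : 0 < a v) (hv : {v} ∈ S) :
    RatPosCst db (fun x => ∑ I ∈ S, EI G' (fun i => a i + b i * x) I) := by
  have hmin : 0 < min (a v) (a v + b v * db) := lt_min hav (hαpos db hdb le_rfl v)
  refine ratPosCst_of_lb hdb hmin ?_ ?_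
  · intro x hx hx'
    have halow : min (a v) (a v + b v * db) ≤ a v + b v * x := by
      rcases le_or_gt 0 (b v) with hb | hb
      · have := min_le_left (a v) (a v + b v * db); nlinarith
      · have := min_le_right (a v) (a v + b v * db); nlinarith
    have h1 : a v + b v * x ≤ EI G' (fun i => a i + b i * x) {v} :=
      ei_single G' _ (hαpos x hx hx') (hD x hx hx') (htot x hx hx') v
    have h2 : EI G' (fun i => a i + b i * x) {v} ≤
        ∑ I ∈ S, EI G' (fun i => a i + b i * x) I :=
      Finset.single_le_sum
        (fun I hI => ei_nonneg G' _ (hαpos x hx hx') (hD x hx hx') I (hS I hI)) hv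
    linarith
  · exact RatOn.sum S _ fun I hI => ei_ratOn G' a b db hD I (hS I hI)

end Assemble

theorem stmt8
    {V : Type} [Fintype V] [DecidableEq V] (G : SimpleGraph V)
    (istar jstar : V) (hne : istar ≠ jstar) (hnadj : ¬ G.Adj istar jstar)
    (a b : V → ℝ) (δbar : ℝ) (hδbar : 0 < δbar)
    (ha : ∀ i, 0 < a i)
    (hpos : ∀ δ : ℝ, 0 < δ → δ ≤ δbar → ∀ i, 0 < a i + b i * δ)
    (hdist : ∀ δ : ℝ, 0 < δ → δ ≤ δbar → ∑ i, (a i + b i * δ) = 1)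
    (hN : ∀ δ : ℝ, 0 < δ → δ ≤ δbar → Ncond G fun i => a i + b i * δ)
    (Ihat : Finset V) (hIhat : Ihat ∈ indepSets G)
    (hsat : aSum a (nbr G Ihat) = aSum a Ihat)
    (huniq : ∀ J ∈ indepSets G, aSum a (nbr G J) = aSum a J → J = Ihat)
 :
    RatPosCst δbar (fun δ =>
        ∑ I ∈ (indepSets (addEdge G istar jstar)).filter (fun I => istar ∈ I ∨ jstar ∈ I),
          EI (addEdge G istar jstar) (fun i => a i + b i * δ) I) ∧
    RatPosCst δbar (fun δ => 1 + ∑ I ∈ indepSets G, TI G (fun i => a i + b i * δ) I) ∧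
    RatPosCst δbar (fun δ =>
        ∑ I ∈ (indepSets G).filter (fun I => istar ∈ I ∨ jstar ∈ I),
          EI G (fun i => a i + b i * δ) I) ∧
    RatPosCst δbar (fun δ =>
        1 + ∑ I ∈ indepSets (addEdge G istar jstar),
          TI (addEdge G istar jstar) (fun i => a i + b i * δ) I) ∧
    RatPosCst δbar (fun δ =>
        ∑ I ∈ (indepSets G).filter (fun I => ¬(istar ∈ I ∨ jstar ∈ I)),
          EI G (fun i => a i + b i * δ) I) := by
  classical
  have hGle : ∀ x y : V, G.Adj x y → (addEdge G istar jstar).Adj x y := by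
    intro x y h
    have : (G ⊔ SimpleGraph.fromEdgeSet {s(istar, jstar)}).Adj x y :=
      (SimpleGraph.sup_adj _ _ _ _).mpr (Or.inl h)
    exact this
  have hDG : ∀ x : ℝ, 0 < x → x ≤ δbar → ∀ J : Finset V, J.Nonempty →
      (∀ i ∈ J, ∀ j ∈ J, ¬ G.Adj i j) →
      0 < aSum (fun i => a i + b i * x) (nbr G J) - aSum (fun i => a i + b i * x) J := by
    intro x hx hx' J hJne hpair
    have := hN x hx hx' J (Finset.mem_filter.2 ⟨Finset.mem_univ _, hJne, hpair⟩)
    linarith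
  have hnbrsub : ∀ J : Finset V, nbr G J ⊆ nbr (addEdge G istar jstar) J := by
    intro J j hj
    simp only [nbr, Finset.mem_filter, Finset.mem_univ, true_and] at hj ⊢
    obtain ⟨i, hi, hadj⟩ := hj
    exact ⟨i, hi, hGle _ _ hadj⟩
  have hDGb : ∀ x : ℝ, 0 < x → x ≤ δbar → ∀ J : Finset V, J.Nonempty →
      (∀ i ∈ J, ∀ j ∈ J, ¬ (addEdge G istar jstar).Adj i j) →
      0 < aSum (fun i => a i + b i * x) (nbr (addEdge G istar jstar) J)
        - aSum (fun i => a i + b i * x) J := by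
    intro x hx hx' J hJne hpair
    have h1 := hDG x hx hx' J hJne (fun i hi j hj hadj => hpair i hi j hj (hGle _ _ hadj))
    have h2 : aSum (fun i => a i + b i * x) (nbr G J) ≤
        aSum (fun i => a i + b i * x) (nbr (addEdge G istar jstar) J) :=
      Finset.sum_le_sum_of_subset_of_nonneg (hnbrsub J) (fun i _ _ => (hpos x hx hx' i).le)
    linarith
  have htot : ∀ x : ℝ, 0 < x → x ≤ δbar →
      aSum (fun i => a i + b i * x) Finset.univ ≤ 1 :=
    fun x hx hx' => le_of_eq (hdist x hx hx')
  have hsingG : ∀ v : V, ({v} : Finset V) ∈ indepSets G := by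
    intro v
    refine Finset.mem_filter.2 ⟨Finset.mem_univ _, ⟨v, Finset.mem_singleton_self v⟩, ?_⟩
    intro i hi j hj
    simp only [Finset.mem_singleton] at hi hj
    subst hi; subst hj; exact G.irrefl
  have hsingGb : ∀ v : V, ({v} : Finset V) ∈ indepSets (addEdge G istar jstar) := by
    intro v
    refine Finset.mem_filter.2 ⟨Finset.mem_univ _, ⟨v, Finset.mem_singleton_self v⟩, ?_⟩
    intro i hi j hj
    simp only [Finset.mem_singleton] at hi hj
    subst hi; subst hj; exact (addEdge G istar jstar).irrefl
  have hpairOf : ∀ (G' : SimpleGraph V), ∀ I ∈ indepSets G', ∀ i ∈ I, ∀ j ∈ I, ¬ G'.Adj i j := by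
    intro G' I hI
    exact (Finset.mem_filter.1 hI).2.2
  obtain ⟨u, huadj⟩ : ∃ u, G.Adj istar u := by
    have hlt := hN δbar hδbar le_rfl {istar} (hsingG istar)
    have hne' : (nbr G {istar}).Nonempty := by
      by_contra hemp
      rw [Finset.not_nonempty_iff_eq_empty] at hemp
      rw [hemp] at hlt
      simp only [aSum, Finset.sum_empty, Finset.sum_singleton] at hlt
      have := hpos δbar hδbar le_rfl istar
      linarith
    obtain ⟨w, hw⟩ := hne'
    simp only [nbr, Finset.mem_filter, Finset.mem_univ, true_and, Finset.mem_singleton] at hw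
    obtain ⟨i, hi, hadj⟩ := hw
    exact ⟨w, hi ▸ hadj⟩
  have hui : u ≠ istar := fun h => G.irrefl (h ▸ huadj)
  have huj : u ≠ jstar := fun h => hnadj (h ▸ huadj)
  refine ⟨?_, ?_, ?_, ?_, ?_⟩
  · refine esum_ratPosCst _ a b δbar hδbar hpos hDGb htot _ ?_ istar (ha istar) ?_
    · intro I hI
      exact hpairOf _ I (Finset.mem_filter.1 hI).1
    · exact Finset.mem_filter.2 ⟨hsingGb istar, Or.inl (Finset.mem_singleton_self istar)⟩
  · exact tsum_ratPosCst G a b δbar hδbar hpos hDG _ (hpairOf G)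
  · refine esum_ratPosCst G a b δbar hδbar hpos hDG htot _ ?_ istar (ha istar) ?_
    · intro I hI
      exact hpairOf _ I (Finset.mem_filter.1 hI).1
    · exact Finset.mem_filter.2 ⟨hsingG istar, Or.inl (Finset.mem_singleton_self istar)⟩
  · exact tsum_ratPosCst _ a b δbar hδbar hpos hDGb _ (hpairOf _)
  · refine esum_ratPosCst G a b δbar hδbar hpos hDG htot _ ?_ u (ha u) ?_
    · intro I hI
      exact hpairOf _ I (Finset.mem_filter.1 hI).1
    · refine Finset.mem_filter.2 ⟨hsingG u, ?_⟩
      simp only [Finset.mem_singleton]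
      push_neg
      exact ⟨fun h => hui h.symm, fun h => huj h.symm⟩
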